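/- Let G be a finite abelian group, R ≠ G_r a G-regular subgroup of Sym(G), K = ⟨G_r, R⟩, A = V(K,G) the transitivity-module S-ring, and V = O_θ(A) the thin radical. Then G_r ∩ R = V_r (the group of right translations by elements of V). -/

import Mathlib

/-- The right regular representation `G →* Sym(G)`, `g ↦ (x ↦ x * g)`
(made a homomorphism w.r.t. the permutation product `(f*g) x = f (g x)`). -/
def rightRegHom (G : Type*) [Group G] : G →* Equiv.Perm G where
  toFun g := Equiv.mulRight g⁻¹
  map_one' := by ext x; simp
  map_mul' a b := by ext x; simp [mul_assoc]

/-- The group of right translations `G_r ≤ Sym(G)`. -/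
def rightReg (G : Type*) [Group G] : Subgroup (Equiv.Perm G) :=
  (rightRegHom G).range

/-- A subgroup of `Sym(α)` is regular if it acts simply transitively. -/
def IsRegularPermSubgroup {α : Type*} (R : Subgroup (Equiv.Perm α)) : Prop :=
  ∀ x y : α, ∃! r : R, (r : Equiv.Perm α) x = y

/-- A `G`-regular subgroup of `Sym(G)`: a regular subgroup isomorphic to `G`. -/
def IsGRegular (G : Type*) [Group G] (R : Subgroup (Equiv.Perm G)) : Prop :=
  IsRegularPermSubgroup R ∧ Nonempty (R ≃* G)

/-- The holomorph `Hol(G) = G_r ⋊ Aut(G)` as a subgroup of `Sym(G)`. -/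
def hol (G : Type*) [Group G] : Subgroup (Equiv.Perm G) where
  carrier := {f : Equiv.Perm G | ∃ σ : MulAut G, ∃ a : G, ∀ g : G, f g = σ g * a}
  one_mem' := ⟨1, 1, fun g => by simp⟩
  mul_mem' := by
    rintro f f' ⟨σ, a, hf⟩ ⟨σ', a', hf'⟩
    refine ⟨σ * σ', σ a' * a, fun g => ?_⟩
    rw [Equiv.Perm.mul_apply, hf' g, hf, map_mul]
    simp [mul_assoc]
  inv_mem' := by
    rintro f ⟨σ, a, hf⟩
    refine ⟨σ⁻¹, σ⁻¹ (a⁻¹), fun g => f.injective ?_⟩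
    rw [show ∀ (e : Equiv.Perm G) (x : G), e (e⁻¹ x) = x from fun e x => e.apply_symm_apply x, hf, ← map_mul]
    simp

/-- The 2-closure of a permutation group: all permutations preserving each
orbit of the componentwise action on ordered pairs. -/
def twoClosure {α : Type*} (K : Subgroup (Equiv.Perm α)) : Subgroup (Equiv.Perm α) where
  carrier := {f : Equiv.Perm α | ∀ x y : α, ∃ k ∈ K, f x = k x ∧ f y = k y}
  one_mem' := fun x y => ⟨1, K.one_mem, rfl, rfl⟩
  mul_mem' := by
    intro f g hf hg x y
    obtain ⟨k, hk, hk1, hk2⟩ := hg x y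
    obtain ⟨k', hk', h1, h2⟩ := hf (g x) (g y)
    refine ⟨k' * k, mul_mem hk' hk, ?_, ?_⟩
    · rw [Equiv.Perm.mul_apply, Equiv.Perm.mul_apply, h1, hk1]
    · rw [Equiv.Perm.mul_apply, Equiv.Perm.mul_apply, h2, hk2]
  inv_mem' := by
    intro f hf x y
    obtain ⟨k, hk, h1, h2⟩ := hf (f⁻¹ x) (f⁻¹ y)
    refine ⟨k⁻¹, inv_mem hk, k.injective ?_, k.injective ?_⟩
    · rw [(show ∀ (e : Equiv.Perm α) (x : α), e (e⁻¹ x) = x from fun e x => e.apply_symm_apply x), ← h1, (show ∀ (e : Equiv.Perm α) (x : α), e (e⁻¹ x) = x from fun e x => e.apply_symm_apply x)]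
    · rw [(show ∀ (e : Equiv.Perm α) (x : α), e (e⁻¹ x) = x from fun e x => e.apply_symm_apply x), ← h2, (show ∀ (e : Equiv.Perm α) (x : α), e (e⁻¹ x) = x from fun e x => e.apply_symm_apply x)]

/-- A permutation group `K` with `G_r ≤ K` is `G`-transjugate if every
`G`-regular subgroup of `K` is conjugate in `K` to `G_r`. -/
def IsTransjugate (G : Type*) [Group G] (K : Subgroup (Equiv.Perm G)) : Prop :=
  ∀ R : Subgroup (Equiv.Perm G), R ≤ K → IsGRegular G R →
    ∃ k ∈ K, Subgroup.map (MulAut.conj k).toMonoidHom R = rightReg G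

/-- `G` is an `NCI⁽²⁾`-group: every 2-closed subgroup of `Sym(G)` between
`G_r` and `Hol(G)` is `G`-transjugate. -/
def IsNCI2 (G : Type*) [Group G] : Prop :=
  ∀ K : Subgroup (Equiv.Perm G), rightReg G ≤ K → K ≤ hol G →
    twoClosure K = K → IsTransjugate G K

/-- The natural embedding `Sym(α) × Sym(β) →* Sym(α × β)`. -/
def prodPermHom (α β : Type*) : Equiv.Perm α × Equiv.Perm β →* Equiv.Perm (α × β) where
  toFun p := Equiv.prodCongr p.1 p.2
  map_one' := by ext x <;> simp
  map_mul' p q := by ext x <;> simp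

lemma rightRegHom_apply {G : Type*} [Group G] (g x : G) :
    rightRegHom G g x = x * g⁻¹ := rfl

lemma rightRegHom_mem {G : Type*} [Group G] (g : G) :
    rightRegHom G g ∈ rightReg G := ⟨g, rfl⟩

/-- Let `G` be a finite abelian group, `R ≠ G_r` a
`G`-regular subgroup of `Sym(G)`, `K = ⟨G_r, R⟩`, `A = V(K,G)` and
`V = O_θ(A)` its thin radical (the set of fixed points of the stabilizer
`K_e`). Then `G_r ∩ R = V_r`. -/
theorem intersection_eq_thin {G : Type*} [CommGroup G] [Fintype G]
    (R : Subgroup (Equiv.Perm G)) (hR : IsGRegular G R)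
    (hne : R ≠ rightReg G) :
    ∀ f : Equiv.Perm G, f ∈ rightReg G ⊓ R ↔
      ∃ v : G,
        (∀ k : Equiv.Perm G, k ∈ rightReg G ⊔ R → k 1 = 1 → k v = v) ∧
        f = rightRegHom G v := by
  obtain ⟨e⟩ := hR.2
  -- R is commutative
  have hRcomm : ∀ a b : R, a * b = b * a := fun a b => by
    apply e.injective
    rw [map_mul, map_mul, mul_comm]
  have hRcomm' : ∀ a b : Equiv.Perm G, a ∈ R → b ∈ R → a * b = b * a := by
    intro a b ha hb
    have := hRcomm ⟨a, ha⟩ ⟨b, hb⟩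
    exact congrArg Subtype.val this
  intro f
  constructor
  · rintro ⟨hfG, hfR⟩
    obtain ⟨g, rfl⟩ := hfG
    refine ⟨g, ?_, rfl⟩
    intro k hk hk1
    -- every element of the sup commutes with `rightRegHom G g`
    have hcent : rightReg G ⊔ R ≤ Subgroup.centralizer {rightRegHom G g} := by
      refine sup_le ?_ ?_
      · rintro t ⟨a, rfl⟩
        rw [Subgroup.mem_centralizer_iff]
        rintro x hx
        rw [Set.mem_singleton_iff] at hx
        subst hx
        rw [← map_mul, ← map_mul, mul_comm]
      · intro r hr
        rw [Subgroup.mem_centralizer_iff]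
        rintro x hx
        rw [Set.mem_singleton_iff] at hx
        subst hx
        exact hRcomm' _ _ hfR hr
    have hc := (Subgroup.mem_centralizer_iff.mp (hcent hk)) _ (Set.mem_singleton _)
    have := congrArg (fun p : Equiv.Perm G => p g) hc
    have hkg : k g * g⁻¹ = 1 := by
      simpa only [Equiv.Perm.mul_apply, rightRegHom_apply, mul_inv_cancel, hk1] using this
    calc k g = k g * g⁻¹ * g := by group
      _ = g := by rw [hkg, one_mul]
  · rintro ⟨v, hv, rfl⟩
    refine ⟨⟨v, rfl⟩, ?_⟩
    -- Step A: every r ∈ R commutes with multiplication by v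
    have stepA : ∀ r : Equiv.Perm G, r ∈ R → ∀ x : G, r (x * v) = r x * v := by
      intro r hr x
      set k : Equiv.Perm G := rightRegHom G (r x) * r * rightRegHom G x⁻¹ with hkdef
      have hkmem : k ∈ rightReg G ⊔ R :=
        mul_mem (mul_mem (Subgroup.mem_sup_left (rightRegHom_mem (r x)))
          (Subgroup.mem_sup_right hr)) (Subgroup.mem_sup_left (rightRegHom_mem x⁻¹))
      have hk1 : k 1 = 1 := by
        simp only [hkdef, Equiv.Perm.mul_apply, rightRegHom_apply, inv_inv, one_mul,
          mul_inv_cancel]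
      have hkv := hv k hkmem hk1
      have : r (v * x) * (r x)⁻¹ = v := by
        simpa only [hkdef, Equiv.Perm.mul_apply, rightRegHom_apply, inv_inv] using hkv
      have h2 : r (v * x) = v * r x := by
        calc r (v * x) = r (v * x) * (r x)⁻¹ * r x := by group
          _ = v * r x := by rw [this]
      rw [mul_comm x v, h2, mul_comm]
    -- consequence: r (y * v⁻¹) = r y * v⁻¹
    have stepA' : ∀ r : Equiv.Perm G, r ∈ R → ∀ y : G, r (y * v⁻¹) = r y * v⁻¹ := by
      intro r hr y
      have := stepA r hr (y * v⁻¹)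
      rw [inv_mul_cancel_right] at this
      rw [eq_mul_inv_iff_mul_eq]
      exact this.symm
    -- Step C: rightRegHom G v ∈ R by regularity
    obtain ⟨r₀, hr₀1, -⟩ := hR.1 (1 : G) v⁻¹
    have key : rightRegHom G v = (r₀ : Equiv.Perm G) := by
      ext x
      obtain ⟨s, hs1, -⟩ := hR.1 (1 : G) x
      have h1 : rightRegHom G v x = (s : Equiv.Perm G) v⁻¹ := by
        have := stepA' s s.2 (1 : G)
        rw [one_mul] at this
        rw [rightRegHom_apply, ← hs1, ← this]
      have h2 : (r₀ : Equiv.Perm G) x = (s : Equiv.Perm G) v⁻¹ := by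
        have hc := hRcomm' (r₀ : Equiv.Perm G) (s : Equiv.Perm G) r₀.2 s.2
        have := congrArg (fun p : Equiv.Perm G => p 1) hc
        simpa only [Equiv.Perm.mul_apply, hs1, hr₀1] using this
      rw [h1, h2]
    rw [key]
    exact r₀.2
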